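/- Let K be a nonempty subset of L²(Ω, G; ℝ^d) for a sub-σ-algebra G. Then the closed convex decomposable hull satisfies cl( conv( dec_G(K) ) ) = cl( { Σ_{i=1}^n λ_i ζ^i : n ∈ ℕ, ζ^1,…,ζ^n ∈ K, λ ∈ L²(Ω,G;ℝ^n) with λ(ω) ∈ Δ^{n−1} a.s. } ), where the closure is taken in L². -/

import Mathlib

open MeasureTheory ENNReal Filter

/-- The `G`-decomposable hull of a set `K` of functions. -/
def decHull {Ω E : Type*} [AddCommMonoid E] (G : MeasurableSpace Ω)
    (K : Set (Ω → E)) : Set (Ω → E) :=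
  { g | ∃ (n : ℕ) (ξ : Fin n → Ω → E) (A : Fin n → Set Ω),
      (∀ i, ξ i ∈ K) ∧ (∀ i, MeasurableSet[G] (A i)) ∧
      Pairwise (Function.onFun Disjoint A) ∧ (⋃ i, A i) = Set.univ ∧
      g = fun ω => ∑ i, (A i).indicator (ξ i) ω }

/-- The set of random convex combinations of elements of `K`, with `G`-measurable
square-integrable random weights valued a.s. in the unit simplex. -/
def randConvComb {Ω E : Type*} {mΩ : MeasurableSpace Ω} [NormedAddCommGroup E]
    [NormedSpace ℝ E] (μ : Measure Ω) (G : MeasurableSpace Ω)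
    (K : Set (Ω → E)) : Set (Ω → E) :=
  { g | ∃ (n : ℕ) (ζ : Fin n → Ω → E) (lam : Ω → Fin n → ℝ),
      (∀ i, ζ i ∈ K) ∧ StronglyMeasurable[G] lam ∧ MemLp lam 2 μ ∧
      (∀ᵐ ω ∂μ, (∀ i, 0 ≤ lam ω i) ∧ ∑ i, lam ω i = 1) ∧
      g = fun ω => ∑ i, lam ω i • ζ i ω }

/-- The closure of a set of functions in the `L²`-norm. -/
def L2Closure {Ω E : Type*} {mΩ : MeasurableSpace Ω} [NormedAddCommGroup E]
    (μ : Measure Ω) (S : Set (Ω → E)) : Set (Ω → E) :=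
  { g | AEStronglyMeasurable g μ ∧
      ∃ f : ℕ → Ω → E, (∀ k, f k ∈ S) ∧
        Tendsto (fun k => eLpNorm (f k - g) 2 μ) atTop (nhds 0) }

section L2

variable {Ω : Type*} {mΩ : MeasurableSpace Ω} {μ : Measure Ω}

lemma L2Closure_mono {F : Type*} [NormedAddCommGroup F] {S T : Set (Ω → F)} (h : S ⊆ T) :
    L2Closure μ S ⊆ L2Closure μ T := by
  rintro g ⟨hg, f, hf, hc⟩
  exact ⟨hg, f, fun k => h (hf k), hc⟩

lemma L2Closure_idem {F : Type*} [NormedAddCommGroup F] {S : Set (Ω → F)}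
    (hS : ∀ f ∈ S, AEStronglyMeasurable f μ) :
    L2Closure μ (L2Closure μ S) ⊆ L2Closure μ S := by
  rintro g ⟨hg, f, hf, hc⟩
  have hfae : ∀ k, AEStronglyMeasurable (f k) μ := fun k => (hf k).1
  have hchoose : ∀ k : ℕ, ∃ h : Ω → F, h ∈ S ∧
      eLpNorm (h - f k) 2 μ < ((k : ℝ≥0∞))⁻¹ := by
    intro k
    obtain ⟨hfk, u, hu, huc⟩ := hf k
    have hpos : (0 : ℝ≥0∞) < (k : ℝ≥0∞)⁻¹ := by
      simp [ENNReal.inv_pos, ENNReal.natCast_ne_top]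
    obtain ⟨j, hj⟩ := (huc.eventually_lt_const hpos).exists
    exact ⟨u j, hu j, hj⟩
  choose h hmem hlt using hchoose
  refine ⟨hg, h, hmem, ?_⟩
  have hle : ∀ k, eLpNorm (h k - g) 2 μ ≤ (k : ℝ≥0∞)⁻¹ + eLpNorm (f k - g) 2 μ := by
    intro k
    have : h k - g = (h k - f k) + (f k - g) := by abel
    rw [this]
    exact le_trans
      (eLpNorm_add_le ((hS _ (hmem k)).sub (hfae k)) ((hfae k).sub hg) one_le_two)
      (add_le_add (hlt k).le le_rfl)
  have hu : Tendsto (fun k : ℕ => (k : ℝ≥0∞)⁻¹ + eLpNorm (f k - g) 2 μ) atTop (nhds 0) := by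
    have := ENNReal.tendsto_inv_nat_nhds_zero.add hc
    simpa using this
  exact tendsto_of_tendsto_of_tendsto_of_le_of_le tendsto_const_nhds hu
    (fun k => zero_le) hle

end L2

section Dec

variable {Ω F : Type*} [AddCommMonoid F] {G : MeasurableSpace Ω} {K : Set (Ω → F)}

lemma mem_decHull_of {ι : Type*} [Fintype ι] (ξ : ι → Ω → F) (A : ι → Set Ω)
    (hξ : ∀ i, ξ i ∈ K) (hA : ∀ i, MeasurableSet[G] (A i))
    (hdisj : Pairwise (Function.onFun Disjoint A)) (hcover : (⋃ i, A i) = Set.univ) :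
    (fun ω => ∑ i, (A i).indicator (ξ i) ω) ∈ decHull G K := by
  classical
  obtain ⟨e⟩ : Nonempty (Fin (Fintype.card ι) ≃ ι) := ⟨(Fintype.equivFin ι).symm⟩
  refine ⟨Fintype.card ι, fun k => ξ (e k), fun k => A (e k), fun k => hξ _, fun k => hA _,
    hdisj.comp_of_injective e.injective, ?_, ?_⟩
  · rw [← hcover]
    exact e.surjective.iUnion_comp _
  · funext ω
    exact (Equiv.sum_comp e (fun i => (A i).indicator (ξ i) ω)).symm

lemma subset_decHull : K ⊆ decHull G K := by
  intro f hf
  have := mem_decHull_of (G := G) (ι := Fin 1) (fun _ => f) (fun _ => Set.univ)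
    (fun _ => hf) (fun _ => MeasurableSet.univ)
    (fun i j hij => absurd (Subsingleton.elim i j) hij) (by rw [Set.iUnion_const])
  have heq : (fun ω => ∑ _i : Fin 1, Set.indicator Set.univ f ω) = f := by
    funext ω; simp
  rw [heq] at this
  exact this

end Dec

section DecGroup

variable {Ω F : Type*} [AddCommGroup F] {G : MeasurableSpace Ω} {K : Set (Ω → F)}

lemma decHull_piecewise {s : Set Ω} [∀ ω, Decidable (ω ∈ s)]
    (hs : MeasurableSet[G] s)
    {g h : Ω → F} (hg : g ∈ decHull G K) (hh : h ∈ decHull G K) :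
    s.piecewise g h ∈ decHull G K := by
  classical
  obtain ⟨n, ξ, A, hξ, hA, hdisj, hcover, rfl⟩ := hg
  obtain ⟨n', ξ', A', hξ', hA', hdisj', hcover', rfl⟩ := hh
  have key := mem_decHull_of (G := G) (K := K) (ι := Fin n ⊕ Fin n')
    (Sum.elim ξ ξ') (Sum.elim (fun i => A i ∩ s) (fun j => A' j ∩ sᶜ))
    (fun i => by cases i <;> simp [hξ _, hξ' _])
    (fun i => by
      cases i with
      | inl i => exact (hA i).inter hs
      | inr j => exact (hA' j).inter hs.compl)
    (by
      intro i j hij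
      cases i with
      | inl i =>
        cases j with
        | inl j =>
          have hij' : i ≠ j := fun hq => hij (by rw [hq])
          exact Disjoint.mono Set.inter_subset_left Set.inter_subset_left (hdisj hij')
        | inr j =>
          exact Disjoint.mono Set.inter_subset_right Set.inter_subset_right
            disjoint_compl_right
      | inr i =>
        cases j with
        | inl j =>
          exact Disjoint.mono Set.inter_subset_right Set.inter_subset_right
            disjoint_compl_left
        | inr j =>
          have hij' : i ≠ j := fun hq => hij (by rw [hq])
          exact Disjoint.mono Set.inter_subset_left Set.inter_subset_left (hdisj' hij'))
    (by
      apply Set.eq_univ_of_forall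
      intro ω
      by_cases hω : ω ∈ s
      · have : ω ∈ ⋃ i, A i := hcover ▸ Set.mem_univ ω
        obtain ⟨i, hi⟩ := Set.mem_iUnion.mp this
        exact Set.mem_iUnion.mpr ⟨Sum.inl i, hi, hω⟩
      · have : ω ∈ ⋃ i, A' i := hcover' ▸ Set.mem_univ ω
        obtain ⟨j, hj⟩ := Set.mem_iUnion.mp this
        exact Set.mem_iUnion.mpr ⟨Sum.inr j, hj, hω⟩)
  have heq : (fun ω => ∑ i : Fin n ⊕ Fin n',
      ((Sum.elim (fun i => A i ∩ s) (fun j => A' j ∩ sᶜ)) i).indicator ((Sum.elim ξ ξ') i) ω)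
      = s.piecewise (fun ω => ∑ i, (A i).indicator (ξ i) ω)
          (fun ω => ∑ i, (A' i).indicator (ξ' i) ω) := by
    funext ω
    rw [Fintype.sum_sum_type]
    by_cases hω : ω ∈ s
    · rw [Set.piecewise_eq_of_mem _ _ _ hω]
      have h2 : ∀ j : Fin n', (A' j ∩ sᶜ).indicator (ξ' j) ω = 0 := fun j =>
        Set.indicator_of_notMem (show ω ∉ A' j ∩ sᶜ from fun hc => hc.2 hω) _
      have h1 : ∀ i : Fin n, (A i ∩ s).indicator (ξ i) ω = (A i).indicator (ξ i) ω := by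
        intro i
        by_cases hi : ω ∈ A i
        · rw [Set.indicator_of_mem (Set.mem_inter hi hω), Set.indicator_of_mem hi]
        · rw [Set.indicator_of_notMem (show ω ∉ A i ∩ s from fun hc => hi hc.1), Set.indicator_of_notMem hi]
      simp only [Sum.elim_inl, Sum.elim_inr, h1, h2, Finset.sum_const_zero, add_zero]
    · rw [Set.piecewise_eq_of_notMem _ _ _ hω]
      have h1 : ∀ i : Fin n, (A i ∩ s).indicator (ξ i) ω = 0 := fun i =>
        Set.indicator_of_notMem (show ω ∉ A i ∩ s from fun hc => hω hc.2) _
      have h2 : ∀ j : Fin n', (A' j ∩ sᶜ).indicator (ξ' j) ω = (A' j).indicator (ξ' j) ω := by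
        intro j
        by_cases hj : ω ∈ A' j
        · rw [Set.indicator_of_mem (Set.mem_inter hj hω), Set.indicator_of_mem hj]
        · rw [Set.indicator_of_notMem (show ω ∉ A' j ∩ sᶜ from fun hc => hj hc.1), Set.indicator_of_notMem hj]
      simp only [Sum.elim_inl, Sum.elim_inr, h1, h2, Finset.sum_const_zero, zero_add]
  rw [heq] at key
  exact key

end DecGroup

section ConvPiece

variable {Ω F : Type*} [AddCommGroup F] [Module ℝ F] {G : MeasurableSpace Ω} {S : Set (Ω → F)}

lemma convexHull_piecewise {s : Set Ω} [∀ ω, Decidable (ω ∈ s)]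
    (hSpw : ∀ {g h : Ω → F}, g ∈ S → h ∈ S → s.piecewise g h ∈ S)
    {u v : Ω → F} (hu : u ∈ convexHull ℝ S) (hv : v ∈ convexHull ℝ S) :
    s.piecewise u v ∈ convexHull ℝ S := by
  classical
  rw [convexHull_eq] at hu hv
  obtain ⟨ι, t, w, z, hw0, hw1, hz, rfl⟩ := hu
  obtain ⟨ι', t', w', z', hw0', hw1', hz', rfl⟩ := hv
  have key := Finset.centerMass_mem_convexHull (t ×ˢ t')
    (w := fun p => w p.1 * w' p.2)
    (fun p hp => by
      obtain ⟨h1, h2⟩ := Finset.mem_product.mp hp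
      exact mul_nonneg (hw0 _ h1) (hw0' _ h2))
    (by
      rw [Finset.sum_product, ← Finset.sum_mul_sum, hw1, hw1']
      norm_num)
    (z := fun p => s.piecewise (z p.1) (z' p.2))
    (fun p hp => by
      obtain ⟨h1, h2⟩ := Finset.mem_product.mp hp
      exact hSpw (hz _ h1) (hz' _ h2))
  have hsum : ∑ p ∈ t ×ˢ t', w p.1 * w' p.2 = 1 := by
    rw [Finset.sum_product, ← Finset.sum_mul_sum, hw1, hw1', mul_one]
  rw [Finset.centerMass_eq_of_sum_1 _ _ hsum] at key
  have heq : (∑ p ∈ t ×ˢ t', (w p.1 * w' p.2) • s.piecewise (z p.1) (z' p.2))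
      = s.piecewise (t.centerMass w z) (t'.centerMass w' z') := by
    rw [Finset.centerMass_eq_of_sum_1 _ _ hw1, Finset.centerMass_eq_of_sum_1 _ _ hw1']
    funext ω
    rw [Finset.sum_apply]
    by_cases hω : ω ∈ s
    · rw [Set.piecewise_eq_of_mem _ _ _ hω, Finset.sum_apply]
      rw [Finset.sum_product]
      refine Finset.sum_congr rfl fun i hi => ?_
      have : ∀ j ∈ t', ((w i * w' j) • s.piecewise (z i) (z' j)) ω
          = (w i * w' j) • z i ω := by
        intro j hj
        simp [Set.piecewise_eq_of_mem _ _ _ hω]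
      rw [Finset.sum_congr rfl this]
      rw [← Finset.sum_smul]
      have : ∑ j ∈ t', w i * w' j = w i := by rw [← Finset.mul_sum, hw1', mul_one]
      rw [this]
      simp
    · rw [Set.piecewise_eq_of_notMem _ _ _ hω, Finset.sum_apply]
      rw [Finset.sum_product_right]
      refine Finset.sum_congr rfl fun j hj => ?_
      have : ∀ i ∈ t, ((w i * w' j) • s.piecewise (z i) (z' j)) ω
          = (w i * w' j) • z' j ω := by
        intro i hi
        simp [Set.piecewise_eq_of_notMem _ _ _ hω]
      rw [Finset.sum_congr rfl this]
      rw [← Finset.sum_smul]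
      have : ∑ i ∈ t, w i * w' j = w' j := by
        rw [← Finset.sum_mul, hw1, one_mul]
      rw [this]
      simp
  rw [heq] at key
  exact key

end ConvPiece

section SM

variable {Ω F : Type*} {mΩ : MeasurableSpace Ω} {μ : Measure Ω}
  [NormedAddCommGroup F] [NormedSpace ℝ F]
  {G : MeasurableSpace Ω} {K : Set (Ω → F)}

lemma smulSum_SM {ι : Type*} [Fintype ι] {w : Ω → ι → ℝ} (hw : StronglyMeasurable[G] w)
    {ζ : ι → Ω → F} (hζ : ∀ i, StronglyMeasurable[G] (ζ i)) :
    StronglyMeasurable[G] (fun ω => ∑ i, w ω i • ζ i ω) :=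
  Finset.stronglyMeasurable_fun_sum _ fun i _ =>
    ((continuous_apply i).comp_stronglyMeasurable hw).smul (hζ i)

-- indicator sum: each ω in exactly one A i
lemma indicator_sum_eq {ι : Type*} [Fintype ι] [DecidableEq ι] {A : ι → Set Ω}
    (hdisj : Pairwise (Function.onFun Disjoint A)) (hcover : (⋃ i, A i) = Set.univ) (ω : Ω) :
    ∑ i, (A i).indicator (fun _ => (1:ℝ)) ω = 1 := by
  obtain ⟨i₀, hi₀⟩ : ∃ i, ω ∈ A i := by
    have : ω ∈ ⋃ i, A i := hcover ▸ Set.mem_univ ω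
    simpa using this
  rw [Finset.sum_eq_single i₀]
  · simp [hi₀]
  · intro j _ hj
    have : ω ∉ A j := fun hωj => (Set.disjoint_left.mp (hdisj hj)) hωj hi₀
    simp [this]
  · simp

lemma const_comb_mem {n : ℕ} {ζ : Fin n → Ω → F} (hζ : ∀ i, ζ i ∈ K)
    {c : Fin n → ℝ} (hc0 : ∀ i, 0 ≤ c i) (hc1 : ∑ i, c i = 1) :
    (fun ω => ∑ i, c i • ζ i ω) ∈ convexHull ℝ (decHull G K) := by
  have key := Finset.centerMass_mem_convexHull (R := ℝ) (Finset.univ : Finset (Fin n))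
    (w := c) (fun i _ => hc0 i) (by rw [hc1]; norm_num)
    (z := ζ) (fun i _ => subset_decHull (G := G) (hζ i))
  rw [Finset.centerMass_eq_of_sum_1 _ _ hc1] at key
  have heq : (∑ i, c i • ζ i) = (fun ω => ∑ i, c i • ζ i ω) := by
    funext ω; rw [Finset.sum_apply]; rfl
  rw [heq] at key
  exact key

lemma simple_comb_mem {n : ℕ} {ζ : Fin n → Ω → F} (hζ : ∀ i, ζ i ∈ K)
    (s : Finset (Fin n → ℝ)) (hsne : s.Nonempty)
    (hsΔ : ∀ x ∈ s, (∀ i, 0 ≤ x i) ∧ ∑ i, x i = 1)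
    (σ : Ω → Fin n → ℝ) (hσ : Measurable[G] σ) (hval : ∀ ω, σ ω ∈ s) :
    (fun ω => ∑ i, σ ω i • ζ i ω) ∈ convexHull ℝ (decHull G K) := by
  classical
  induction hsne using Finset.Nonempty.cons_induction generalizing σ with
  | singleton a =>
    have hσa : ∀ ω, σ ω = a := fun ω => Finset.mem_singleton.mp (hval ω)
    have heq : (fun ω => ∑ i, σ ω i • ζ i ω) = (fun ω => ∑ i, a i • ζ i ω) := by
      funext ω; rw [hσa ω]
    rw [heq]
    exact const_comb_mem hζ (hsΔ a (Finset.mem_singleton_self a)).1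
      (hsΔ a (Finset.mem_singleton_self a)).2
  | cons c t hc ht IH =>
    obtain ⟨c', hc'⟩ := ht
    set B : Set Ω := σ ⁻¹' {c} with hBdef
    have hB : MeasurableSet[G] B := hσ (MeasurableSet.singleton c)
    set σ' : Ω → Fin n → ℝ := fun ω => if σ ω = c then c' else σ ω with hσ'def
    have hσ'meas : Measurable[G] σ' := Measurable.piecewise hB measurable_const hσ
    have hval' : ∀ ω, σ' ω ∈ t := by
      intro ω
      by_cases hω : σ ω = c
      · simp only [hσ'def, hω, if_pos rfl]; exact hc'
      · simp only [hσ'def, if_neg hω]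
        rcases Finset.mem_cons.mp (hval ω) with h | h
        · exact absurd h hω
        · exact h
    have hmem' := IH (fun x hx => hsΔ x (Finset.mem_cons_of_mem hx)) σ' hσ'meas hval'
    have hmemc : (fun ω => ∑ i, c i • ζ i ω) ∈ convexHull ℝ (decHull G K) :=
      const_comb_mem hζ (hsΔ c (Finset.mem_cons_self c t)).1 (hsΔ c (Finset.mem_cons_self c t)).2
    have key := convexHull_piecewise (s := B) (S := decHull G K)
      (fun hg hh => decHull_piecewise hB hg hh) hmemc hmem'
    have heq : B.piecewise (fun ω => ∑ i, c i • ζ i ω) (fun ω => ∑ i, σ' ω i • ζ i ω)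
        = (fun ω => ∑ i, σ ω i • ζ i ω) := by
      funext ω
      by_cases hω : σ ω = c
      · rw [Set.piecewise_eq_of_mem _ _ _ (by exact hω : ω ∈ B), hω]
      · rw [Set.piecewise_eq_of_notMem _ _ _ (by exact hω : ω ∉ B)]
        simp only [hσ'def, if_neg hω]
    rw [heq] at key
    exact key

lemma tendsto_eLpNorm_two_of_dominated {Fn : ℕ → Ω → F} 
    (hFm : ∀ m, AEStronglyMeasurable[mΩ] (Fn m) μ) {b : Ω → ℝ} (hb : MemLp b 2 μ)
    (hbound : ∀ m, ∀ᵐ ω ∂μ, ‖Fn m ω‖ ≤ b ω)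
    (hlim : ∀ᵐ ω ∂μ, Tendsto (fun m => Fn m ω) atTop (nhds 0)) :
    Tendsto (fun m => eLpNorm (Fn m) 2 μ) atTop (nhds 0) := by
  have h2 : ((2:ℝ≥0∞)).toReal = (2:ℝ) := by norm_num
  have hI : Tendsto (fun m => ∫⁻ ω, (‖Fn m ω‖₊ : ℝ≥0∞) ^ (2:ℝ) ∂μ) atTop (nhds 0) := by
    have := tendsto_lintegral_of_dominated_convergence' 
      (bound := fun ω => (‖b ω‖₊ : ℝ≥0∞) ^ (2:ℝ))
      (F := fun m ω => (‖Fn m ω‖₊ : ℝ≥0∞) ^ (2:ℝ)) (f := fun _ => 0)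
      (fun m => (ENNReal.continuous_rpow_const.measurable.comp_aemeasurable
        (hFm m).enorm))
      (fun m => by
        filter_upwards [hbound m] with ω hω
        refine ENNReal.rpow_le_rpow ?_ (by norm_num)
        rw [ENNReal.coe_le_coe]
        have : ‖Fn m ω‖ ≤ ‖b ω‖ := hω.trans (le_abs_self _)
        exact this
        )
      (by
        have := lintegral_rpow_enorm_lt_top_of_eLpNorm_lt_top (f := b) (p := 2) (μ := μ)
          two_ne_zero (by norm_num) hb.2
        rw [h2] at this
        exact this.ne)
      (by
        filter_upwards [hlim] with ω hω
        have h0 : Tendsto (fun m => (‖Fn m ω‖₊ : ℝ≥0∞)) atTop (nhds 0) := by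
          have : Tendsto (fun m => (‖Fn m ω‖₊ : ℝ≥0∞)) atTop (nhds ((‖(0:F)‖₊ : ℝ≥0∞))) := 
            ((ENNReal.continuous_coe.comp continuous_nnnorm).tendsto 0).comp hω
          simpa using this
        have := h0.ennrpow_const (2:ℝ)
        simpa [ENNReal.zero_rpow_of_pos] using this)
    simpa using this
  have heq : ∀ m, eLpNorm (Fn m) 2 μ 
      = (∫⁻ ω, (‖Fn m ω‖₊ : ℝ≥0∞) ^ (2:ℝ) ∂μ) ^ (1/2 : ℝ) := by
    intro m
    rw [eLpNorm_eq_lintegral_rpow_enorm_toReal two_ne_zero (by norm_num), h2]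
    rfl
  simp only [heq]
  have := hI.ennrpow_const (1/2 : ℝ)
  simpa [ENNReal.zero_rpow_of_pos] using this

end SM

lemma exists_simple_approx {Ω : Type*} {n : ℕ} (G : MeasurableSpace Ω) {f : Ω → Fin n → ℝ}
    (hf : Measurable[G] f) (hmem : ∀ ω, f ω ∈ stdSimplex ℝ (Fin n))
    (c₀ : Fin n → ℝ) (hc₀ : c₀ ∈ stdSimplex ℝ (Fin n)) :
    ∃ σ : ℕ → Ω → Fin n → ℝ, (∀ m, Measurable[G] (σ m)) ∧
      (∀ m, ∃ s : Finset (Fin n → ℝ), s.Nonempty ∧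
        (∀ x ∈ s, x ∈ stdSimplex ℝ (Fin n)) ∧ ∀ ω, σ m ω ∈ s) ∧
      (∀ ω, Tendsto (fun m => σ m ω) atTop (nhds (f ω))) := by
  classical
  letI : MeasurableSpace Ω := G
  set Δ := stdSimplex ℝ (Fin n) with hΔ
  have hΔclosed : IsClosed Δ := isClosed_stdSimplex ℝ (Fin n)
  set σ : ℕ → SimpleFunc Ω (Fin n → ℝ) := fun m => SimpleFunc.approxOn f hf Δ c₀ hc₀ m with hσ
  refine ⟨fun m => σ m, fun m => (σ m).measurable, fun m => ?_, fun ω => ?_⟩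
  · refine ⟨insert c₀ (σ m).range, Finset.insert_nonempty _ _, ?_, ?_⟩
    · intro x hx
      rcases Finset.mem_insert.mp hx with rfl | hx
      · exact hc₀
      · obtain ⟨ω, hω⟩ := SimpleFunc.mem_range.mp hx
        rw [← hω]
        exact SimpleFunc.approxOn_mem hf hc₀ m ω
    · intro ω
      exact Finset.mem_insert_of_mem (SimpleFunc.mem_range_self _ ω)
  · exact SimpleFunc.tendsto_approxOn hf hc₀ (by rw [hΔclosed.closure_eq]; exact hmem ω)

section Rand

variable {Ω F : Type*} {mΩ : MeasurableSpace Ω} {μ : Measure Ω} [IsProbabilityMeasure μ]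
  [NormedAddCommGroup F] [NormedSpace ℝ F]
  {G : MeasurableSpace Ω} {K : Set (Ω → F)}

lemma mem_randConvComb_of (hG : G ≤ mΩ) {ι : Type*} [Fintype ι]
    (ζ : ι → Ω → F) (lam : Ω → ι → ℝ)
    (hζ : ∀ i, ζ i ∈ K) (hlam : ∀ i, StronglyMeasurable[G] (fun ω => lam ω i))
    (hae : ∀ᵐ ω ∂μ, (∀ i, 0 ≤ lam ω i) ∧ ∑ i, lam ω i = 1) :
    (fun ω => ∑ i, lam ω i • ζ i ω) ∈ randConvComb μ G K := by
  classical
  obtain ⟨e⟩ : Nonempty (Fin (Fintype.card ι) ≃ ι) := ⟨(Fintype.equivFin ι).symm⟩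
  set lam' : Ω → Fin (Fintype.card ι) → ℝ := fun ω k => lam ω (e k) with hlam'def
  have hSM : StronglyMeasurable[G] lam' := by
    refine Measurable.stronglyMeasurable ?_
    exact measurable_pi_iff.mpr fun k => (hlam (e k)).measurable
  have hae' : ∀ᵐ ω ∂μ, (∀ k, 0 ≤ lam' ω k) ∧ ∑ k, lam' ω k = 1 := by
    filter_upwards [hae] with ω hω
    exact ⟨fun k => hω.1 _, by rw [Equiv.sum_comp e (lam ω)]; exact hω.2⟩
  refine ⟨Fintype.card ι, fun k => ζ (e k), lam', fun k => hζ _, hSM, ?_, hae', ?_⟩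
  · refine MemLp.of_bound ((hSM.mono hG).aestronglyMeasurable) 1 ?_
    filter_upwards [hae] with ω hω
    rw [pi_norm_le_iff_of_nonneg zero_le_one]
    intro k
    rw [Real.norm_eq_abs, abs_le]
    constructor
    · linarith [hω.1 (e k)]
    · calc lam ω (e k) ≤ ∑ i, lam ω i :=
            Finset.single_le_sum (fun i _ => hω.1 i) (Finset.mem_univ _)
        _ = 1 := hω.2
  · funext ω
    exact (Equiv.sum_comp e (fun i => lam ω i • ζ i ω)).symm

lemma decHull_subset_randConvComb (hG : G ≤ mΩ) :
    decHull G K ⊆ randConvComb μ G K := by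
  classical
  rintro g ⟨n, ξ, A, hξ, hA, hdisj, hcover, rfl⟩
  have key := mem_randConvComb_of (μ := μ) (K := K) hG ξ
    (fun ω i => (A i).indicator (fun _ => (1:ℝ)) ω) hξ
    (fun i => by
      refine Measurable.stronglyMeasurable ?_
      exact measurable_const.indicator (hA i))
    (Filter.Eventually.of_forall fun ω =>
      ⟨fun i => Set.indicator_nonneg (fun _ _ => zero_le_one) ω, indicator_sum_eq hdisj hcover ω⟩)
  have heq : (fun ω => ∑ i, (A i).indicator (fun _ => (1:ℝ)) ω • ξ i ω)
      = (fun ω => ∑ i, (A i).indicator (ξ i) ω) := by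
    funext ω
    refine Finset.sum_congr rfl fun i _ => ?_
    by_cases hω : ω ∈ A i <;> simp [hω]
  rw [heq] at key
  exact key

lemma convex_randConvComb (hG : G ≤ mΩ) : Convex ℝ (randConvComb μ G K) := by
  classical
  rintro g₁ ⟨n₁, ζ₁, lam₁, hζ₁, hSM₁, hL2₁, hae₁, rfl⟩
    g₂ ⟨n₂, ζ₂, lam₂, hζ₂, hSM₂, hL2₂, hae₂, rfl⟩ a b ha hb hab
  have key := mem_randConvComb_of (μ := μ) (K := K) hG (ι := Fin n₁ ⊕ Fin n₂)
    (Sum.elim ζ₁ ζ₂)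
    (fun ω => Sum.elim (fun i => a * lam₁ ω i) (fun j => b * lam₂ ω j))
    (fun i => by cases i <;> simp [hζ₁ _, hζ₂ _])
    (fun i => by
      cases i with
      | inl i => exact (stronglyMeasurable_const.mul
          ((continuous_apply i).comp_stronglyMeasurable hSM₁))
      | inr j => exact (stronglyMeasurable_const.mul
          ((continuous_apply j).comp_stronglyMeasurable hSM₂)))
    ?_
  · have heq : (fun ω => ∑ i : Fin n₁ ⊕ Fin n₂,
        (Sum.elim (fun i => a * lam₁ ω i) (fun j => b * lam₂ ω j)) i • (Sum.elim ζ₁ ζ₂) i ω)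
        = a • (fun ω => ∑ i, lam₁ ω i • ζ₁ i ω) + b • (fun ω => ∑ i, lam₂ ω i • ζ₂ i ω) := by
      funext ω
      simp only [Pi.add_apply, Pi.smul_apply, Fintype.sum_sum_type, Sum.elim_inl, Sum.elim_inr,
        Finset.smul_sum, smul_smul]
    rw [heq] at key
    exact key
  · filter_upwards [hae₁, hae₂] with ω h₁ h₂
    constructor
    · intro i
      cases i with
      | inl i => exact mul_nonneg ha (h₁.1 i)
      | inr j => exact mul_nonneg hb (h₂.1 j)
    · rw [Fintype.sum_sum_type]
      simp only [Sum.elim_inl, Sum.elim_inr, ← Finset.mul_sum, h₁.2, h₂.2, mul_one]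
      exact hab

end Rand

section Approx

variable {Ω : Type*} {mΩ : MeasurableSpace Ω} {μ : Measure Ω} [IsProbabilityMeasure μ] {d : ℕ}
  {G : MeasurableSpace Ω} {K : Set (Ω → EuclideanSpace ℝ (Fin d))}

lemma randConvComb_subset_L2Closure (hG : G ≤ mΩ)
    (hKmeas : ∀ f ∈ K, StronglyMeasurable[G] f) (hKL2 : ∀ f ∈ K, MemLp f 2 μ) :
    randConvComb μ G K ⊆ L2Closure μ (convexHull ℝ (decHull G K)) := by
  classical
  rintro g ⟨n, ζ, lam, hζ, hlamSM, hlamL2, hae, rfl⟩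
  have hζSM : ∀ i, StronglyMeasurable[G] (ζ i) := fun i => hKmeas _ (hζ i)
  have hgSM : StronglyMeasurable[G] (fun ω => ∑ i, lam ω i • ζ i ω) :=
    smulSum_SM hlamSM hζSM
  refine ⟨(hgSM.mono hG).aestronglyMeasurable, ?_⟩
  rcases Nat.eq_zero_or_pos n with rfl | hn
  · exfalso
    have hFalse : ∀ᵐ ω ∂μ, False := by
      filter_upwards [hae] with ω hω
      simpa using hω.2
    have hμ0 : μ = 0 := ae_eq_bot.mp (Filter.eventually_false_iff_eq_bot.mp hFalse)
    have h1 := measure_univ (μ := μ)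
    rw [hμ0] at h1
    simp at h1
  -- the uniform simplex point
  set cu : Fin n → ℝ := fun _ => (n : ℝ)⁻¹ with hcu
  have hn' : (0:ℝ) < n := by exact_mod_cast hn
  have hcuΔ : cu ∈ stdSimplex ℝ (Fin n) := by
    constructor
    · intro i; positivity
    · simp only [hcu, Finset.sum_const, Finset.card_univ, Fintype.card_fin, nsmul_eq_mul]
      field_simp
  set Δ := stdSimplex ℝ (Fin n) with hΔ
  have hΔclosed : IsClosed Δ := isClosed_stdSimplex ℝ (Fin n)
  have hlam_meas : Measurable[G] lam := hlamSM.measurable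
  set lam' : Ω → Fin n → ℝ := (lam ⁻¹' Δ).piecewise lam (fun _ => cu) with hlam'def
  have hpre : MeasurableSet[G] (lam ⁻¹' Δ) := hlam_meas hΔclosed.measurableSet
  have hlam'meas : Measurable[G] lam' := Measurable.piecewise hpre hlam_meas measurable_const
  have hlam'mem : ∀ ω, lam' ω ∈ Δ := by
    intro ω
    by_cases hω : lam ω ∈ Δ
    · rw [hlam'def, Set.piecewise_eq_of_mem _ _ _ (show ω ∈ lam ⁻¹' Δ from hω)]; exact hω
    · rw [hlam'def, Set.piecewise_eq_of_notMem _ _ _ (show ω ∉ lam ⁻¹' Δ from hω)]; exact hcuΔ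
  have hlam'ae : ∀ᵐ ω ∂μ, lam' ω = lam ω := by
    filter_upwards [hae] with ω hω
    exact Set.piecewise_eq_of_mem _ _ _ (show ω ∈ lam ⁻¹' Δ from hω)
  obtain ⟨σ, hσmeas, hσrange, hσtendsto⟩ := exists_simple_approx G hlam'meas hlam'mem cu hcuΔ
  -- the approximating sequence
  set f : ℕ → Ω → EuclideanSpace ℝ (Fin d) := fun m ω => ∑ i, σ m ω i • ζ i ω with hfdef
  have hfmem : ∀ m, f m ∈ convexHull ℝ (decHull G K) := by
    intro m
    obtain ⟨s, hsne, hsΔ', hval⟩ := hσrange m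
    exact simple_comb_mem hζ s hsne (fun x hx => hsΔ' x hx) (σ m) (hσmeas m) hval
  refine ⟨f, hfmem, ?_⟩
  -- convergence
  have hfSM : ∀ m, StronglyMeasurable[G] (f m) := fun m =>
    smulSum_SM (Measurable.stronglyMeasurable (hσmeas m)) hζSM
  have hFaesm : ∀ m, AEStronglyMeasurable[mΩ] (f m - fun ω => ∑ i, lam ω i • ζ i ω) μ :=
    fun m => (((hfSM m).sub hgSM).mono hG).aestronglyMeasurable
  have hbL2 : MemLp (fun ω => ∑ i, ‖ζ i ω‖) 2 μ :=
    memLp_finset_sum Finset.univ (fun i _ => (hKL2 _ (hζ i)).norm)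
  refine tendsto_eLpNorm_two_of_dominated hFaesm hbL2 ?_ ?_
  · intro m
    filter_upwards [hae] with ω hω
    have hcoord : ∀ (x : Fin n → ℝ), (∀ i, 0 ≤ x i) → (∑ j, x j = 1) → ∀ i, 0 ≤ x i ∧ x i ≤ 1 := by
      intro x hx0 hx1 i
      refine ⟨hx0 i, ?_⟩
      calc x i ≤ ∑ j, x j := Finset.single_le_sum (fun j _ => hx0 j) (Finset.mem_univ i)
        _ = 1 := hx1
    have hdiff : ∀ i, |σ m ω i - lam ω i| ≤ 1 := by
      intro i
      have hσΔ : σ m ω ∈ stdSimplex ℝ (Fin n) :=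
        hσrange m |>.choose_spec.2.1 _ (hσrange m |>.choose_spec.2.2 ω)
      have h1 := hcoord _ hσΔ.1 hσΔ.2 i
      have h2 := hcoord (lam ω) hω.1 hω.2 i
      rw [abs_le]
      constructor <;> linarith [h1.1, h1.2, h2.1, h2.2]
    calc ‖(f m - fun ω => ∑ i, lam ω i • ζ i ω) ω‖
        = ‖∑ i, (σ m ω i - lam ω i) • ζ i ω‖ := by
          rw [Pi.sub_apply]
          congr 1
          rw [← Finset.sum_sub_distrib]
          refine Finset.sum_congr rfl fun i _ => ?_
          rw [sub_smul]
      _ ≤ ∑ i, ‖(σ m ω i - lam ω i) • ζ i ω‖ := norm_sum_le _ _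
      _ ≤ ∑ i, ‖ζ i ω‖ := by
          refine Finset.sum_le_sum fun i _ => ?_
          rw [norm_smul, Real.norm_eq_abs]
          calc |σ m ω i - lam ω i| * ‖ζ i ω‖ ≤ 1 * ‖ζ i ω‖ :=
                mul_le_mul_of_nonneg_right (hdiff i) (norm_nonneg _)
            _ = ‖ζ i ω‖ := one_mul _
  · filter_upwards [hlam'ae] with ω hω
    have htends : Tendsto (fun m => f m ω) atTop (nhds (∑ i, lam ω i • ζ i ω)) := by
      have : Tendsto (fun m => σ m ω) atTop (nhds (lam ω)) := hω ▸ hσtendsto ω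
      refine tendsto_finset_sum _ fun i _ => ?_
      exact (((continuous_apply i).tendsto _).comp this).smul_const (ζ i ω)
    have := htends.sub (tendsto_const_nhds (x := ∑ i, lam ω i • ζ i ω))
    simpa using this

end Approx

/-- The closed convex decomposable hull of `K ⊆ L²(Ω, G; ℝ^d)` coincides with the
`L²`-closure of the set of random convex combinations of elements of `K`. -/
theorem stmt_16 {Ω : Type*} {mΩ : MeasurableSpace Ω} {μ : Measure Ω}
    [IsProbabilityMeasure μ] {d : ℕ} (G : MeasurableSpace Ω) (hG : G ≤ mΩ)
    (K : Set (Ω → EuclideanSpace ℝ (Fin d))) (hKne : K.Nonempty)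
    (hKmeas : ∀ f ∈ K, StronglyMeasurable[G] f) (hKL2 : ∀ f ∈ K, MemLp f 2 μ) :
    L2Closure μ (convexHull ℝ (decHull G K)) = L2Closure μ (randConvComb μ G K) := by
  classical
  have hsub1 : decHull G K ⊆ randConvComb μ G K := decHull_subset_randConvComb hG
  have hconv : Convex ℝ (randConvComb μ G K) := convex_randConvComb hG
  have hsub : convexHull ℝ (decHull G K) ⊆ randConvComb μ G K := convexHull_min hsub1 hconv
  apply Set.Subset.antisymm
  · exact L2Closure_mono hsub
  · have hE := randConvComb_subset_L2Closure hG hKmeas hKL2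
    have hAESM : ∀ f ∈ convexHull ℝ (decHull G K), AEStronglyMeasurable[mΩ] f μ := by
      intro f hf
      obtain ⟨n, ζ, lam, hζ, hlamSM, _, _, rfl⟩ := hsub hf
      exact ((smulSum_SM hlamSM (fun i => hKmeas _ (hζ i))).mono hG).aestronglyMeasurable
    exact Set.Subset.trans (L2Closure_mono hE) (L2Closure_idem hAESM)
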